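/- Let F be a real symplectic matrix with det(I+F) ≠ 0 and set K_F = (I+F)(I+F+iJ(I−F))^{-1}. Then Re(K_F) = K_F K_F* = (I + N²)^{-1} and Im(K_F) = −N(I+N²)^{-1}, where N = J(I−F)(I+F)^{-1}. -/

import Mathlib

open Matrix Complex

theorem stmt_14 (n : ℕ) (F : Matrix (Fin n ⊕ Fin n) (Fin n ⊕ Fin n) ℝ)
    (hF : Fᵀ * (Matrix.fromBlocks 0 1 (-1) 0) * F = (Matrix.fromBlocks 0 1 (-1) 0 :
      Matrix (Fin n ⊕ Fin n) (Fin n ⊕ Fin n) ℝ))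
    (hdet : (1 + F).det ≠ 0)
    (N : Matrix (Fin n ⊕ Fin n) (Fin n ⊕ Fin n) ℝ)
    (hN : N = (Matrix.fromBlocks 0 1 (-1) 0) * (1 - F) * (1 + F)⁻¹)
    (KF : Matrix (Fin n ⊕ Fin n) (Fin n ⊕ Fin n) ℂ)
    (hK : KF = (1 + F.map Complex.ofReal) *
      (1 + F.map Complex.ofReal + Complex.I •
        ((Matrix.fromBlocks 0 1 (-1) 0 : Matrix (Fin n ⊕ Fin n) (Fin n ⊕ Fin n) ℂ) *
          (1 - F.map Complex.ofReal)))⁻¹) :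
    KF.map Complex.re = (1 + N ^ 2)⁻¹ ∧
    KF * KFᴴ = ((1 + N ^ 2)⁻¹).map Complex.ofReal ∧
    KF.map Complex.im = -(N * (1 + N ^ 2)⁻¹) := by
  set J : Matrix (Fin n ⊕ Fin n) (Fin n ⊕ Fin n) ℝ := Matrix.fromBlocks 0 1 (-1) 0 with hJdef
  set A : Matrix (Fin n ⊕ Fin n) (Fin n ⊕ Fin n) ℝ := 1 + F with hAdef
  have hA : IsUnit A.det := hdet.isUnit
  have hAT : IsUnit Aᵀ.det := by rwa [Matrix.det_transpose]
  have hJT : Jᵀ = -J := by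
    rw [hJdef, Matrix.fromBlocks_transpose, Matrix.fromBlocks_neg]
    simp
  -- key identity from the symplectic condition
  have E : (1 - Fᵀ) * (-J) * A = Aᵀ * (J * (1 - F)) := by
    have h1 : (1 - Fᵀ) * (-J) * A = -J - J * F + Fᵀ * J + Fᵀ * J * F := by
      rw [hAdef]; noncomm_ring
    have h2 : Aᵀ * (J * (1 - F)) = J - J * F + Fᵀ * J - Fᵀ * J * F := by
      rw [hAdef, Matrix.transpose_add, Matrix.transpose_one]; noncomm_ring
    rw [h1, h2, hF]; noncomm_ring
  have hNsym : Nᵀ = N := by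
    have hNT : Nᵀ = Aᵀ⁻¹ * ((1 - Fᵀ) * (-J)) := by
      rw [hN, Matrix.transpose_mul, Matrix.transpose_mul, Matrix.transpose_nonsing_inv,
        Matrix.transpose_sub, Matrix.transpose_one, hJT]
    have h3 : (1 - Fᵀ) * (-J) = Aᵀ * (J * (1 - F)) * A⁻¹ := by
      rw [← E, mul_assoc, Matrix.mul_nonsing_inv _ hA, mul_one]
    rw [hNT, h3, hN]
    simp only [← mul_assoc]
    rw [Matrix.nonsing_inv_mul _ hAT, one_mul]
  -- 1 + N^2 is positive definite, hence invertible
  have hconj : Nᴴ = N := by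
    rw [Matrix.conjTranspose]
    conv_rhs => rw [← hNsym]
    ext i j
    simp
  have hPD : (1 + N ^ 2).PosDef := by
    have h4 : 1 + N ^ 2 = 1 + Nᴴ * N := by rw [hconj, sq]
    rw [h4]
    exact Matrix.PosDef.add_posSemidef Matrix.PosDef.one
      (Matrix.posSemidef_conjTranspose_mul_self N)
  have hB : IsUnit (1 + N ^ 2).det := hPD.det_pos.ne'.isUnit
  -- move to ℂ
  set φ : Matrix (Fin n ⊕ Fin n) (Fin n ⊕ Fin n) ℝ →+* Matrix (Fin n ⊕ Fin n) (Fin n ⊕ Fin n) ℂ :=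
    (Complex.ofRealHom).mapMatrix with hφdef
  have hφ : ∀ X : Matrix (Fin n ⊕ Fin n) (Fin n ⊕ Fin n) ℝ, φ X = X.map Complex.ofReal := by
    intro X; rfl
  have hdetφ : ∀ X : Matrix (Fin n ⊕ Fin n) (Fin n ⊕ Fin n) ℝ,
      IsUnit X.det → IsUnit (φ X).det := by
    intro X hX
    rw [hφdef, ← RingHom.map_det]
    exact isUnit_iff_ne_zero.2 (by
      simp only [ofRealHom_eq_coe, ne_eq, ofReal_eq_zero]
      exact hX.ne_zero)
  set Jc : Matrix (Fin n ⊕ Fin n) (Fin n ⊕ Fin n) ℂ :=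
    Matrix.fromBlocks 0 1 (-1) 0 with hJcdef
  have hJc : φ J = Jc := by
    ext i j
    cases i <;> cases j <;>
      simp [hφ, hJdef, hJcdef, Matrix.map_apply, Matrix.fromBlocks, Matrix.one_apply,
        apply_ite Complex.ofReal]
  set Mc : Matrix (Fin n ⊕ Fin n) (Fin n ⊕ Fin n) ℂ := φ N with hMcdef
  have hAc : IsUnit (φ A).det := hdetφ A hA
  -- factor the denominator
  have hfact : 1 + F.map Complex.ofReal + Complex.I • (Jc * (1 - F.map Complex.ofReal))
      = (1 + Complex.I • Mc) * φ A := by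
    have hMA : Mc * φ A = Jc * (1 - F.map Complex.ofReal) := by
      have : N * A = J * (1 - F) := by
        rw [hN, mul_assoc, Matrix.nonsing_inv_mul _ hA, mul_one]
      rw [hMcdef, ← _root_.map_mul, this, _root_.map_mul, hJc]
      congr 1
      rw [_root_.map_sub, _root_.map_one, hφ]
    rw [add_mul, one_mul, Matrix.smul_mul, hMA]
    congr 1
    rw [show (1 : Matrix (Fin n ⊕ Fin n) (Fin n ⊕ Fin n) ℂ) + F.map Complex.ofReal
        = φ A by rw [hAdef, _root_.map_add, _root_.map_one, hφ]]
  have hKF : KF = (1 + Complex.I • Mc)⁻¹ := by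
    rw [hK, hfact, Matrix.mul_inv_rev, ← mul_assoc]
    have h5 : (1 + F.map Complex.ofReal) = φ A := by
      rw [hAdef, _root_.map_add, _root_.map_one, hφ]
    rw [h5, Matrix.mul_nonsing_inv _ hAc, one_mul]
  -- algebraic identities over ℂ
  have hsq : (Complex.I • Mc) * (Complex.I • Mc) = -(Mc ^ 2) := by
    rw [Matrix.smul_mul, Matrix.mul_smul, smul_smul, Complex.I_mul_I, sq, neg_one_smul]
  have hplus : (1 + Complex.I • Mc) * (1 - Complex.I • Mc) = 1 + Mc ^ 2 := by
    rw [mul_sub, mul_one, add_mul, one_mul, hsq]; abel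
  have hminus : (1 - Complex.I • Mc) * (1 + Complex.I • Mc) = 1 + Mc ^ 2 := by
    rw [mul_add, mul_one, sub_mul, one_mul, hsq]; abel
  have hBc' : (1 : Matrix (Fin n ⊕ Fin n) (Fin n ⊕ Fin n) ℂ) + Mc ^ 2 = φ (1 + N ^ 2) := by
    rw [_root_.map_add, _root_.map_one, map_pow]
  have hBc : IsUnit ((1 : Matrix (Fin n ⊕ Fin n) (Fin n ⊕ Fin n) ℂ) + Mc ^ 2).det := by
    rw [hBc']; exact hdetφ _ hB
  have hPinv : ((1 : Matrix (Fin n ⊕ Fin n) (Fin n ⊕ Fin n) ℂ) + Mc ^ 2)⁻¹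
      = φ ((1 + N ^ 2)⁻¹) := by
    apply Matrix.inv_eq_right_inv
    rw [hBc', ← _root_.map_mul, Matrix.mul_nonsing_inv _ hB, _root_.map_one]
  have hKF2 : KF = φ ((1 + N ^ 2)⁻¹) - Complex.I • φ (N * (1 + N ^ 2)⁻¹) := by
    rw [hKF]
    rw [Matrix.inv_eq_right_inv (show (1 + Complex.I • Mc) *
      ((1 - Complex.I • Mc) * ((1 : Matrix (Fin n ⊕ Fin n) (Fin n ⊕ Fin n) ℂ) + Mc ^ 2)⁻¹) = 1 by
        rw [← mul_assoc, hplus, Matrix.mul_nonsing_inv _ hBc])]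
    rw [sub_mul, one_mul, hPinv, Matrix.smul_mul, hMcdef, ← _root_.map_mul]
  refine ⟨?_, ?_, ?_⟩
  · ext i j
    rw [hKF2]
    simp [Matrix.map_apply, Matrix.sub_apply, Matrix.smul_apply, hφ, smul_eq_mul]
  · have hKFH : KFᴴ = (1 - Complex.I • Mc)⁻¹ := by
      rw [hKF, Matrix.conjTranspose_nonsing_inv]
      congr 1
      have hMcH : Mcᴴ = Mc := by
        rw [hMcdef, hφ]
        ext i j
        simp only [Matrix.conjTranspose_apply, Matrix.map_apply, RCLike.star_def,
          Complex.conj_ofReal]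
        rw [show N j i = Nᵀ i j from rfl, hNsym]
      rw [Matrix.conjTranspose_add, Matrix.conjTranspose_one, Matrix.conjTranspose_smul,
        hMcH]
      simp [sub_eq_add_neg]
    rw [hKFH, hKF, ← Matrix.mul_inv_rev, hminus, hPinv, hφ]
  · ext i j
    rw [hKF2]
    simp [Matrix.map_apply, Matrix.sub_apply, Matrix.smul_apply, hφ, smul_eq_mul,
      Matrix.neg_apply]
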